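/- The function x ↦ (x^β - x^{β₀})/ln x is strictly increasing on the interval (e^{1/β}, ∞) whenever 0 < β₀ < β < 1. -/

import Mathlib

lemma hasDerivAt_aux (β₀ β x : ℝ) (hx : 0 < x) (hL : Real.log x ≠ 0) :
    HasDerivAt (fun x : ℝ =>
        (Real.exp (β * Real.log x) - Real.exp (β₀ * Real.log x)) / Real.log x)
      (((β * Real.log x - 1) * Real.exp (β * Real.log x)
        - (β₀ * Real.log x - 1) * Real.exp (β₀ * Real.log x)) / (x * (Real.log x)^2)) x := by
  have hlog : HasDerivAt Real.log x⁻¹ x := Real.hasDerivAt_log hx.ne'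
  have h1 : HasDerivAt (fun x : ℝ => Real.exp (β * Real.log x))
      (Real.exp (β * Real.log x) * (β * x⁻¹)) x :=
    (Real.hasDerivAt_exp _).comp x (hlog.const_mul β)
  have h2 : HasDerivAt (fun x : ℝ => Real.exp (β₀ * Real.log x))
      (Real.exp (β₀ * Real.log x) * (β₀ * x⁻¹)) x :=
    (Real.hasDerivAt_exp _).comp x (hlog.const_mul β₀)
  have h := (h1.sub h2).div hlog hL
  refine h.congr_deriv ?_
  simp only [Pi.sub_apply]
  have hx0 : x ≠ 0 := hx.ne'
  field_simp
  ring

theorem stmt_5 (β₀ β : ℝ) (hβ₀ : 0 < β₀) (hββ : β₀ < β) (hβ : β < 1) :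
    StrictMonoOn (fun x : ℝ =>
        (Real.exp (β * Real.log x) - Real.exp (β₀ * Real.log x)) / Real.log x)
      (Set.Ioi (Real.exp (1 / β))) := by
  have hβpos : 0 < β := hβ₀.trans hββ
  have hmem : ∀ x ∈ Set.Ioi (Real.exp (1 / β)), 0 < x ∧ 1 / β < Real.log x := by
    intro x hx
    have hx' : Real.exp (1 / β) < x := hx
    have hxpos : 0 < x := (Real.exp_pos _).trans hx'
    refine ⟨hxpos, ?_⟩
    have := Real.log_lt_log (Real.exp_pos _) hx'
    rwa [Real.log_exp] at this
  have key : ∀ x ∈ Set.Ioi (Real.exp (1 / β)), HasDerivAt (fun x : ℝ =>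
        (Real.exp (β * Real.log x) - Real.exp (β₀ * Real.log x)) / Real.log x)
      (((β * Real.log x - 1) * Real.exp (β * Real.log x)
        - (β₀ * Real.log x - 1) * Real.exp (β₀ * Real.log x)) / (x * (Real.log x)^2)) x := by
    intro x hx
    obtain ⟨hxpos, hL⟩ := hmem x hx
    have hLpos : 0 < Real.log x := lt_trans (by positivity) hL
    exact hasDerivAt_aux β₀ β x hxpos hLpos.ne'
  have hpos : ∀ x ∈ Set.Ioi (Real.exp (1 / β)),
      0 < ((β * Real.log x - 1) * Real.exp (β * Real.log x)
        - (β₀ * Real.log x - 1) * Real.exp (β₀ * Real.log x)) / (x * (Real.log x)^2) := by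
    intro x hx
    obtain ⟨hxpos, hL⟩ := hmem x hx
    have hLpos : 0 < Real.log x := lt_trans (by positivity) hL
    have hβL : 1 < β * Real.log x := by
      rw [div_lt_iff₀ hβpos] at hL
      linarith [hL]
    have hnum : (β₀ * Real.log x - 1) * Real.exp (β₀ * Real.log x)
        < (β * Real.log x - 1) * Real.exp (β * Real.log x) := by
      rcases le_or_gt (β₀ * Real.log x - 1) 0 with h | h
      · have : (β₀ * Real.log x - 1) * Real.exp (β₀ * Real.log x) ≤ 0 :=
          mul_nonpos_of_nonpos_of_nonneg h (Real.exp_pos _).le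
        nlinarith [Real.exp_pos (β * Real.log x)]
      · have hlt : β₀ * Real.log x < β * Real.log x := by
          exact mul_lt_mul_of_pos_right hββ hLpos
        have := Real.exp_lt_exp.mpr hlt
        nlinarith [Real.exp_pos (β₀ * Real.log x)]
    apply div_pos (by linarith) (by positivity)
  have hconv : Convex ℝ (Set.Ioi (Real.exp (1 / β))) := convex_Ioi _
  refine strictMonoOn_of_deriv_pos hconv ?_ ?_
  · intro x hx
    exact (key x hx).continuousAt.continuousWithinAt
  · intro x hx
    rw [interior_Ioi] at hx
    rw [(key x hx).deriv]
    exact hpos x hx
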